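/- Suppose [n]! ≠ 0 in k. Then the set of vectors ⋃_α {F^a Ω(α) : 0 ≤ a ≤ i_α}, where the union is over all 1-factors α of length n, is a k-basis of V^{⊗n}, and its elements are pairwise orthogonal with respect to the bilinear form ⟨−,−⟩. -/

import Mathlib

noncomputable section
attribute [local instance] Classical.propDecidable

/-- Balanced quantum integer `[m]` for a natural number `m`. -/
def qintN {k : Type*} [Field k] (v : k) (m : ℕ) : k :=
  ∑ t ∈ Finset.range m, v ^ ((m : ℤ) - 1 - 2 * t)

/-- Balanced quantum integer `[m]` for an integer `m`. -/
def qint {k : Type*} [Field k] (v : k) (m : ℤ) : k :=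
  if 0 ≤ m then qintN v m.toNat else - qintN v (-m).toNat

/-- Quantum factorial `[m]! = [1][2]⋯[m]`. -/
def qfact {k : Type*} [Field k] (v : k) (m : ℕ) : k :=
  ∏ j ∈ Finset.range m, qintN v (j + 1)

/-- The `n`-th tensor power of `V = k²`, realized as coordinate functions with
respect to the basis `y_i`, `i ∈ {1,-1}ⁿ` (here `true ↔ 1`, `false ↔ -1`). -/
abbrev Tn (k : Type*) [Field k] (n : ℕ) := (Fin n → Bool) → k

/-- The sign of an index entry: `true ↦ 1`, `false ↦ -1`. -/
def sgn (b : Bool) : ℤ := if b then 1 else -1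

/-- The weight `i₁ + ⋯ + i_n` of a basis index. -/
def wt {n : ℕ} (i : Fin n → Bool) : ℤ := ∑ t, sgn (i t)

variable {k : Type*} [Field k]

/-- The operator `E` on `V^{⊗n}`. -/
def Eop (v : k) (n : ℕ) : Tn k n →ₗ[k] Tn k n where
  toFun f := fun i =>
    ∑ j ∈ Finset.univ.filter (fun j => i j = true),
      v ^ (∑ t ∈ Finset.univ.filter (fun t => t < j), sgn (i t)) * f (Function.update i j false)
  map_add' f g := by
    funext i
    simp [Pi.add_apply, mul_add, Finset.sum_add_distrib]
  map_smul' c f := by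
    funext i
    simp only [Pi.smul_apply, smul_eq_mul, RingHom.id_apply]
    rw [Finset.mul_sum]
    exact Finset.sum_congr rfl fun j _ => by ring

/-- The operator `F` on `V^{⊗n}`. -/
def Fop (v : k) (n : ℕ) : Tn k n →ₗ[k] Tn k n where
  toFun f := fun i =>
    ∑ j ∈ Finset.univ.filter (fun j => i j = false),
      v ^ (-(∑ t ∈ Finset.univ.filter (fun t => j < t), sgn (i t))) * f (Function.update i j true)
  map_add' f g := by
    funext i
    simp [Pi.add_apply, mul_add, Finset.sum_add_distrib]
  map_smul' c f := by
    funext i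
    simp only [Pi.smul_apply, smul_eq_mul, RingHom.id_apply]
    rw [Finset.mul_sum]
    exact Finset.sum_congr rfl fun j _ => by ring

/-- The operator `K` on `V^{⊗n}`. -/
def Kop (v : k) (n : ℕ) : Tn k n →ₗ[k] Tn k n where
  toFun f := fun i => v ^ (wt i) * f i
  map_add' f g := by
    funext i
    simp [Pi.add_apply, mul_add]
  map_smul' c f := by
    funext i
    simp only [Pi.smul_apply, smul_eq_mul, RingHom.id_apply]
    ring

/-- The symmetric bilinear form on `V^{⊗n}` making the `y_i` orthonormal. -/
def form {n : ℕ} (f g : Tn k n) : k := ∑ i, f i * g i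

/-- Tensoring on the right with the basis vector `y₁` (if `b = true`) or `y₋₁`
(if `b = false`). -/
def tensY {n : ℕ} (b : Bool) (f : Tn k n) : Tn k (n + 1) :=
  fun i => if i (Fin.last n) = b then f (fun t => i t.castSucc) else 0

/-- `Φ₁(b) = b ⊗ y₁`. -/
def Phi1 {n : ℕ} (f : Tn k n) : Tn k (n + 1) := tensY true f

/-- `Φ₂(b) = [w] b ⊗ y₋₁ − v^w (F b) ⊗ y₁`, where `w` is the weight of `b`. -/
def Phi2 (v : k) {n : ℕ} (w : ℤ) (f : Tn k n) : Tn k (n + 1) :=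
  qint v w • tensY false f - v ^ w • tensY true (Fop v n f)

/-- A `1`-factor: all partial sums are nonnegative. -/
def IsOneFactor {n : ℕ} (α : Fin n → Bool) : Prop :=
  ∀ j : Fin n, 0 ≤ ∑ t ∈ Finset.univ.filter (fun t => t ≤ j), sgn (α t)

/-- The orthogonal maximal vectors `Ω(α)`, defined recursively. -/
def Omega (v : k) : (n : ℕ) → (Fin n → Bool) → Tn k n
  | 0, _ => fun _ => 1
  | n + 1, α =>
      if α (Fin.last n) = true then Phi1 (Omega v n fun t => α t.castSucc)
      else Phi2 v (wt fun t => α t.castSucc) (Omega v n fun t => α t.castSucc)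

/-- Exchanging the entries of an index at two positions. -/
def swapPair {n : ℕ} (a b : Fin n) (i : Fin n → Bool) : Fin n → Bool :=
  fun t => if t = a then i b else if t = b then i a else i t

/-- The Temperley--Lieb operator `ė` acting on tensor positions `a` and `b`
(intended: `b = a + 1`). -/
def eop (v : k) {n : ℕ} (a b : Fin n) : Tn k n →ₗ[k] Tn k n where
  toFun f := fun i =>
    if i a = true ∧ i b = false then -v⁻¹ * f i + f (swapPair a b i)
    else if i a = false ∧ i b = true then f (swapPair a b i) - v * f i
    else 0
  map_add' f g := by
    funext i
    simp only [Pi.add_apply]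
    split_ifs <;> ring
  map_smul' c f := by
    funext i
    simp only [Pi.smul_apply, smul_eq_mul, RingHom.id_apply]
    split_ifs <;> ring

/-- The partial sum `α₁ + ⋯ + α_{q-1}` of the entries before position `q`. -/
def prefSum {n : ℕ} (α : Fin n → Bool) (q : Fin n) : ℤ :=
  ∑ t ∈ Finset.univ.filter (fun t => t < q), sgn (α t)

/-- `(i, j)` is a pair of `α`: `α_i = 1` and `j` is the least index `> i` with
`α_i + ⋯ + α_j = 0`. -/
def PairedAt {n : ℕ} (α : Fin n → Bool) (i j : Fin n) : Prop :=
  α i = true ∧ i < j ∧ (∑ t ∈ Finset.Icc i j, sgn (α t)) = 0 ∧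
    ∀ j' : Fin n, i < j' → j' < j → (∑ t ∈ Finset.Icc i j', sgn (α t)) ≠ 0

/-- An index is a defect if it belongs to no pair. -/
def IsDefect {n : ℕ} (α : Fin n → Bool) (i : Fin n) : Prop :=
  (∀ j, ¬ PairedAt α i j) ∧ (∀ j, ¬ PairedAt α j i)

/-- `γ ∈ S(α)`: `γ` is obtained from `α` by negating both entries of each pair
in some subset of the pairs of `α`. -/
def InS {n : ℕ} (α γ : Fin n → Bool) : Prop :=
  (∀ i, IsDefect α i → γ i = α i) ∧
  (∀ i j, PairedAt α i j → (γ i = α i ∧ γ j = α j) ∨ (γ i = !α i ∧ γ j = !α j))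

/-- `σ(α, γ)`: the number of pairs of `α` negated to obtain `γ`. -/
def sigmaCount {n : ℕ} (α γ : Fin n → Bool) : ℕ :=
  Nat.card {p : Fin n × Fin n // PairedAt α p.1 p.2 ∧ γ p.1 ≠ α p.1}

/-- The natural (cellular) vectors `N(α) = Σ_{γ ∈ S(α)} (−v)^{σ(α,γ)} y_γ`,
written in coordinates. -/
def Nvec (v : k) (n : ℕ) (α : Fin n → Bool) : Tn k n :=
  fun γ => if InS α γ then (-v) ^ (sigmaCount α γ) else 0

/-- `β^{(j)}` (0-indexed `j`): change the entry of `β` at the position of its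
`(j+1)`-st defect (0-indexed: defect number `j`) to `−1`. -/
def linkDefect {m : ℕ} (β : Fin m → Bool) (j : ℕ) : Fin m → Bool :=
  match (Finset.sort (Finset.univ.filter (fun i => IsDefect β i)) (· ≤ ·))[j]? with
  | some q => Function.update β q false
  | none => β

namespace Stmt14Aux
open Finset

variable {k : Type*} [Field k] {v : k}

lemma qintN_zero (v : k) : qintN v 0 = 0 := by simp [qintN]

lemma qintN_one (v : k) : qintN v 1 = 1 := by simp [qintN]

lemma qintN_succ (hv : v ≠ 0) (m : ℕ) :
    qintN v (m + 1) = v * qintN v m + v ^ (-(m : ℤ)) := by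
  unfold qintN
  rw [Finset.sum_range_succ, Finset.mul_sum]
  congr 1
  · refine Finset.sum_congr rfl fun t ht => ?_
    rw [← zpow_one_add₀ hv]
    congr 1
    push_cast
    ring
  · congr 1
    push_cast
    ring

lemma qintN_succ' (hv : v ≠ 0) (m : ℕ) :
    qintN v (m + 1) = v⁻¹ * qintN v m + v ^ (m : ℤ) := by
  unfold qintN
  rw [Finset.sum_range_succ', Finset.mul_sum]
  congr 1
  · refine Finset.sum_congr rfl fun t ht => ?_
    rw [show v⁻¹ = v ^ (-1 : ℤ) by simp, ← zpow_add₀ hv]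
    congr 1
    push_cast
    ring
  · congr 1
    push_cast
    ring

lemma qint_natCast (v : k) (m : ℕ) : qint v (m : ℤ) = qintN v m := by
  simp [qint]

lemma qint_zero (v : k) : qint v 0 = 0 := by
  simpa [qintN] using qint_natCast v 0

lemma qint_one (v : k) : qint v 1 = 1 := by
  have := qint_natCast v 1
  simpa [qintN] using this

lemma qint_neg (v : k) (m : ℤ) : qint v (-m) = - qint v m := by
  unfold qint
  rcases lt_trichotomy m 0 with h | h | h
  · rw [if_pos (by omega), if_neg (by omega)]; ring
  · subst h; simp [qintN]
  · rw [if_neg (by omega), if_pos h.le]; simp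

lemma qint_add_one (hv : v ≠ 0) (m : ℤ) :
    qint v (m + 1) = v * qint v m + v ^ (-m) := by
  rcases le_or_gt 0 m with h | h
  · obtain ⟨a, rfl⟩ := Int.eq_ofNat_of_zero_le h
    rw [show (a : ℤ) + 1 = ((a + 1 : ℕ) : ℤ) by push_cast; ring, qint_natCast, qint_natCast,
      qintN_succ hv]
  · obtain ⟨a, rfl⟩ : ∃ a : ℕ, m = -((a + 1 : ℕ) : ℤ) := ⟨(-m - 1).toNat, by omega⟩
    rw [show (-((a+1:ℕ):ℤ) + 1) = -((a:ℕ):ℤ) by push_cast; ring, qint_neg, qint_neg,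
      qint_natCast, qint_natCast, qintN_succ' hv a, neg_neg]
    have e1 : v ^ (((a:ℕ)+1 : ℤ)) = v * v ^ ((a:ℕ) : ℤ) := by
      rw [add_comm, zpow_one_add₀ hv]
    have e2 : v * v⁻¹ = 1 := mul_inv_cancel₀ hv
    push_cast
    rw [e1]
    field_simp
    ring

lemma qint_add_one' (hv : v ≠ 0) (m : ℤ) :
    qint v (m + 1) = v⁻¹ * qint v m + v ^ m := by
  rcases le_or_gt 0 m with h | h
  · obtain ⟨a, rfl⟩ := Int.eq_ofNat_of_zero_le h
    rw [show (a : ℤ) + 1 = ((a + 1 : ℕ) : ℤ) by push_cast; ring, qint_natCast, qint_natCast,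
      qintN_succ' hv]
  · obtain ⟨a, rfl⟩ : ∃ a : ℕ, m = -((a + 1 : ℕ) : ℤ) := ⟨(-m - 1).toNat, by omega⟩
    rw [show (-((a+1:ℕ):ℤ) + 1) = -((a:ℕ):ℤ) by push_cast; ring, qint_neg, qint_neg,
      qint_natCast, qint_natCast, qintN_succ hv a]
    have e1 : v ^ (-((a:ℕ)+1 : ℤ)) = v⁻¹ * v ^ (-((a:ℕ) : ℤ)) := by
      rw [show (-((a:ℕ)+1 : ℤ)) = (-1) + (-((a:ℕ):ℤ)) by ring, zpow_add₀ hv, zpow_neg_one]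
    push_cast
    rw [e1]
    field_simp
    ring

lemma qint_add_nat (hv : v ≠ 0) (a : ℕ) (b : ℤ) :
    qint v ((a : ℤ) + b) = v ^ (a : ℤ) * qint v b + v ^ (-b) * qint v (a : ℤ) := by
  induction a with
  | zero => simp [qint_zero]
  | succ a ih =>
      have h1 : ((a + 1 : ℕ) : ℤ) + b = ((a : ℤ) + b) + 1 := by push_cast; ring
      have e1 : v ^ (((a:ℕ):ℤ)+1) = v * v ^ ((a:ℕ) : ℤ) := by
        rw [add_comm, zpow_one_add₀ hv]
      have e2 : v ^ (-((a:ℤ) + b)) = v ^ (-((a:ℕ):ℤ)) * v ^ (-b) := by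
        rw [← zpow_add₀ hv]; ring_nf
      rw [h1, qint_add_one hv, ih, show ((a+1:ℕ):ℤ) = ((a:ℕ):ℤ) + 1 by push_cast; ring,
        qint_add_one hv ((a:ℕ) : ℤ), e1, e2]
      ring

lemma qint_add (hv : v ≠ 0) (a b : ℤ) :
    qint v (a + b) = v ^ a * qint v b + v ^ (-b) * qint v a := by
  rcases le_or_gt 0 a with h | h
  · obtain ⟨a', rfl⟩ := Int.eq_ofNat_of_zero_le h
    exact qint_add_nat hv a' b
  · obtain ⟨a', rfl⟩ : ∃ a' : ℕ, a = -(a' : ℤ) := ⟨(-a).toNat, by omega⟩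
    have key := qint_add_nat hv a' (-(a' : ℤ) + b)
    rw [show (a' : ℤ) + (-(a' : ℤ) + b) = b by ring, neg_add, neg_neg, zpow_add₀ hv] at key
    -- key : qint v b = v ^ a' * qint v (-a' + b) + v ^ a' * v ^ (-b) * qint v a'
    have h3 : v ^ (-(a':ℤ)) * v ^ ((a':ℤ)) = 1 := by
      rw [← zpow_add₀ hv]; simp
    have h4 : v ^ ((a':ℤ)) * qint v (-(a':ℤ) + b)
        = qint v b - v ^ ((a':ℤ)) * v ^ (-b) * qint v (a':ℤ) := by
      rw [key]; ring
    calc qint v (-(a':ℤ) + b)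
        = v ^ (-(a':ℤ)) * (v ^ ((a':ℤ)) * qint v (-(a':ℤ) + b)) := by
          rw [← mul_assoc, h3, one_mul]
      _ = v ^ (-(a':ℤ)) * (qint v b - v ^ ((a':ℤ)) * v ^ (-b) * qint v (a':ℤ)) := by rw [h4]
      _ = v ^ (-(a':ℤ)) * qint v b
          - (v ^ (-(a':ℤ)) * v ^ ((a':ℤ))) * v ^ (-b) * qint v (a':ℤ) := by ring
      _ = v ^ (-(a':ℤ)) * qint v b + v ^ (-b) * qint v (-(a':ℤ)) := by
          rw [h3, qint_neg]; ring

lemma qint_sub (hv : v ≠ 0) (b c : ℤ) :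
    qint v (c - b) = v ^ (-b) * qint v c - v ^ (-c) * qint v b := by
  have h := qint_add hv (-b) c
  rw [qint_neg] at h
  rw [show c - b = -b + c by ring, h]
  ring

lemma qint_cross (hv : v ≠ 0) (w : ℤ) (a : ℕ) :
    qint v ((a : ℤ) + 1) * qint v (w - a) =
      qint v (a : ℤ) * qint v (w - a + 1) + qint v (w - 2 * a) := by
  have h1 := qint_add_one hv ((a:ℕ) : ℤ)
  have h2 := qint_add_one hv (w - (a:ℕ) : ℤ)
  have h3 : qint v (w - 2 * (a:ℕ)) =
      v ^ (-((a:ℕ):ℤ)) * qint v (w - (a:ℕ)) - v ^ (-(w - (a:ℕ):ℤ)) * qint v ((a:ℕ):ℤ) := by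
    rw [show w - 2 * ((a:ℕ):ℤ) = (w - (a:ℕ)) - ((a:ℕ):ℤ) by ring, qint_sub hv]
  rw [h1, h2, h3]
  ring

lemma sum_qint (hv : v ≠ 0) (w : ℤ) (a : ℕ) :
    ∑ t ∈ Finset.range a, qint v (w - 2 * t) = qint v (a : ℤ) * qint v (w - a + 1) := by
  induction a with
  | zero => simp [qint_zero]
  | succ a ih =>
      rw [Finset.sum_range_succ, ih, show ((a+1:ℕ):ℤ) = (a:ℤ)+1 by push_cast; ring,
        show w - ((a:ℤ)+1) + 1 = w - a by ring, qint_cross hv]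

end Stmt14Aux
-- ### Chunk 2: infrastructure
namespace Stmt14Aux
open Finset

variable {k : Type*} [Field k] {v : k} {n : ℕ}

@[simp] lemma sgn_true : sgn true = 1 := rfl
@[simp] lemma sgn_false : sgn false = -1 := rfl

/-- suffix sum -/
def sufSum {n : ℕ} (i : Fin n → Bool) (j : Fin n) : ℤ :=
  ∑ t ∈ Finset.univ.filter (fun t => j < t), sgn (i t)

lemma Eop_apply (f : Tn k n) (i : Fin n → Bool) :
    Eop v n f i = ∑ j ∈ Finset.univ.filter (fun j => i j = true),
      v ^ (prefSum i j) * f (Function.update i j false) := rfl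

lemma Fop_apply (f : Tn k n) (i : Fin n → Bool) :
    Fop v n f i = ∑ j ∈ Finset.univ.filter (fun j => i j = false),
      v ^ (-(sufSum i j)) * f (Function.update i j true) := rfl

lemma Kop_apply (f : Tn k n) (i : Fin n → Bool) :
    Kop v n f i = v ^ (wt i) * f i := rfl

lemma wt_snoc (i : Fin n → Bool) (b : Bool) :
    wt (Fin.snoc i b) = wt i + sgn b := by
  unfold wt
  rw [Fin.sum_univ_castSucc]
  simp

lemma sgn_comp_update (i : Fin n → Bool) (j : Fin n) (b : Bool) :
    (fun t => sgn (Function.update i j b t)) =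
      Function.update (fun t => sgn (i t)) j (sgn b) := by
  funext t
  by_cases h : t = j
  · subst h; simp
  · simp [Function.update_of_ne h]

lemma wt_update (i : Fin n → Bool) (j : Fin n) (b : Bool) :
    wt (Function.update i j b) = wt i - sgn (i j) + sgn b := by
  unfold wt
  rw [show (∑ t, sgn (Function.update i j b t)) =
      ∑ t, Function.update (fun t => sgn (i t)) j (sgn b) t by
    rw [sgn_comp_update]]
  rw [Finset.sum_update_of_mem (Finset.mem_univ j),
    ← Finset.sum_erase_add _ _ (Finset.mem_univ j), Finset.sdiff_singleton_eq_erase]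
  ring

lemma wt_le (i : Fin n → Bool) : wt i ≤ (n : ℤ) := by
  unfold wt
  calc ∑ t, sgn (i t) ≤ ∑ _t : Fin n, (1 : ℤ) :=
    Finset.sum_le_sum (fun t _ => by rcases (i t) with _ | _ <;> simp)
  _ = n := by simp

/-- the snoc equivalence -/
def snocEquiv (n : ℕ) : (Fin n → Bool) × Bool ≃ (Fin (n + 1) → Bool) where
  toFun p := Fin.snoc p.1 p.2
  invFun i := (Fin.init i, i (Fin.last n))
  left_inv p := by
    ext t
    · simp [Fin.init_snoc]
    · simp
  right_inv i := Fin.snoc_init_self i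

lemma sum_snoc_split (g : (Fin (n + 1) → Bool) → k) :
    ∑ i, g i = ∑ i' : Fin n → Bool, (g (Fin.snoc i' true) + g (Fin.snoc i' false)) := by
  rw [← Equiv.sum_comp (snocEquiv n) g, Fintype.sum_prod_type]
  refine Finset.sum_congr rfl fun i' _ => ?_
  simp [snocEquiv, Fintype.sum_bool]

@[simp] lemma tensY_snoc_same (b : Bool) (f : Tn k n) (i' : Fin n → Bool) :
    tensY b f (Fin.snoc i' b) = f i' := by
  unfold tensY
  rw [if_pos (by simp)]
  congr 1
  funext t
  simp

@[simp] lemma tensY_snoc_ne {b c : Bool} (h : c ≠ b) (f : Tn k n) (i' : Fin n → Bool) :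
    tensY b f (Fin.snoc i' c) = 0 := by
  unfold tensY
  rw [if_neg (by simpa using h)]

lemma tensY_decomp (f : Tn k (n + 1)) :
    f = tensY true (fun i' => f (Fin.snoc i' true)) +
        tensY false (fun i' => f (Fin.snoc i' false)) := by
  funext i
  rw [← Fin.snoc_init_self i]
  rcases h : i (Fin.last n) with _ | _ <;>
    simp [h, tensY_snoc_same, tensY_snoc_ne]

lemma tensY_add (b : Bool) (f g : Tn k n) :
    tensY b (f + g) = tensY b f + tensY b g := by
  funext i
  unfold tensY
  by_cases h : i (Fin.last n) = b <;> simp [h]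

lemma tensY_smul (b : Bool) (c : k) (f : Tn k n) :
    tensY b (c • f) = c • tensY b f := by
  funext i
  unfold tensY
  by_cases h : i (Fin.last n) = b <;> simp [h]

lemma tensY_sub (b : Bool) (f g : Tn k n) :
    tensY b (f - g) = tensY b f - tensY b g := by
  funext i
  unfold tensY
  by_cases h : i (Fin.last n) = b <;> simp [h]

-- form basics
lemma form_symm (f g : Tn k n) : form f g = form g f :=
  Finset.sum_congr rfl fun i _ => mul_comm _ _

lemma form_add_left (f g h : Tn k n) : form (f + g) h = form f h + form g h := by
  unfold form
  rw [← Finset.sum_add_distrib]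
  exact Finset.sum_congr rfl fun i _ => by simp [add_mul]

lemma form_add_right (f g h : Tn k n) : form f (g + h) = form f g + form f h := by
  rw [form_symm, form_add_left, form_symm g f, form_symm h f]

lemma form_smul_left (c : k) (f g : Tn k n) : form (c • f) g = c * form f g := by
  unfold form
  rw [Finset.mul_sum]
  exact Finset.sum_congr rfl fun i _ => by simp [mul_assoc]

lemma form_smul_right (c : k) (f g : Tn k n) : form f (c • g) = c * form f g := by
  rw [form_symm, form_smul_left, form_symm]

lemma form_sub_left (f g h : Tn k n) : form (f - g) h = form f h - form g h := by
  unfold form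
  rw [← Finset.sum_sub_distrib]
  exact Finset.sum_congr rfl fun i _ => by simp [sub_mul]

lemma form_sub_right (f g h : Tn k n) : form f (g - h) = form f g - form f h := by
  rw [form_symm, form_sub_left, form_symm g f, form_symm h f]

lemma form_tensY (b c : Bool) (f g : Tn k n) :
    form (tensY b f) (tensY c g) = if b = c then form f g else 0 := by
  unfold form
  rw [sum_snoc_split (fun i => tensY b f i * tensY c g i)]
  rcases b <;> rcases c <;> simp [tensY_snoc_same, tensY_snoc_ne]

-- prefix and suffix sums under snoc
lemma prefSum_snoc_castSucc (i' : Fin n → Bool) (b : Bool) (j : Fin n) :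
    prefSum (Fin.snoc i' b) j.castSucc = prefSum i' j := by
  unfold prefSum
  rw [Finset.sum_filter, Finset.sum_filter, Fin.sum_univ_castSucc]
  have hlast : ¬ (Fin.last n < j.castSucc) := by
    exact not_lt.mpr (Fin.le_last _)
  rw [if_neg hlast]
  simp [Fin.castSucc_lt_castSucc_iff]

lemma prefSum_snoc_last (i' : Fin n → Bool) (b : Bool) :
    prefSum (Fin.snoc i' b) (Fin.last n) = wt i' := by
  unfold prefSum wt
  rw [Finset.sum_filter, Fin.sum_univ_castSucc]
  simp [Fin.castSucc_lt_last]

lemma sufSum_snoc_castSucc (i' : Fin n → Bool) (b : Bool) (j : Fin n) :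
    sufSum (Fin.snoc i' b) j.castSucc = sufSum i' j + sgn b := by
  unfold sufSum
  rw [Finset.sum_filter, Finset.sum_filter, Fin.sum_univ_castSucc]
  rw [if_pos (Fin.castSucc_lt_last j)]
  simp [Fin.castSucc_lt_castSucc_iff]

lemma sufSum_snoc_last (i' : Fin n → Bool) (b : Bool) :
    sufSum (Fin.snoc i' b) (Fin.last n) = 0 := by
  unfold sufSum
  rw [Finset.sum_filter, Fin.sum_univ_castSucc]
  have h1 : ∀ j : Fin n, ¬ (Fin.last n < j.castSucc) :=
    fun j => not_lt.mpr (Fin.castSucc_lt_last j).le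
  simp [h1]

end Stmt14Aux
-- ### Chunk 3: commutation lemmas
namespace Stmt14Aux
open Finset

variable {k : Type*} [Field k] {v : k} {n : ℕ}

lemma Fop_tensY_true (hv : v ≠ 0) (g : Tn k n) :
    Fop v (n + 1) (tensY true g) = tensY true (v⁻¹ • Fop v n g) + tensY false g := by
  funext i
  rw [← Fin.snoc_init_self i]
  generalize Fin.init i = i'
  generalize i (Fin.last n) = b
  rw [Fop_apply, Finset.sum_filter, Fin.sum_univ_castSucc, Pi.add_apply]
  have hterm : ∀ j : Fin n,
      (if (Fin.snoc i' b : Fin (n + 1) → Bool) j.castSucc = false then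
        v ^ (-(sufSum (Fin.snoc i' b) j.castSucc)) *
          tensY true g (Function.update (Fin.snoc i' b) j.castSucc true) else 0)
      = (if i' j = false then
          v ^ (-(sufSum i' j + sgn b)) *
            tensY true g (Fin.snoc (Function.update i' j true) b) else 0) := by
    intro j
    rw [Fin.snoc_castSucc, sufSum_snoc_castSucc, ← Fin.snoc_update]
  rw [Finset.sum_congr rfl (fun j _ => hterm j)]
  rcases b with _ | _
  · -- b = false
    rw [tensY_snoc_ne (by simp), tensY_snoc_same, Fin.snoc_last, if_pos rfl,
      sufSum_snoc_last, Fin.update_snoc_last, tensY_snoc_same]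
    rw [Finset.sum_congr rfl (fun j _ => show
      (if i' j = false then v ^ (-(sufSum i' j + sgn false)) *
        tensY true g (Fin.snoc (Function.update i' j true) false) else 0) = 0 by
      rw [tensY_snoc_ne (by simp)]; simp)]
    simp
  · -- b = true
    rw [tensY_snoc_same, tensY_snoc_ne (by simp), Fin.snoc_last, if_neg (by simp),
      Pi.smul_apply, Fop_apply, Finset.sum_filter, smul_eq_mul, Finset.mul_sum]
    rw [add_zero, add_zero]
    refine Finset.sum_congr rfl fun j _ => ?_
    rw [tensY_snoc_same]
    by_cases h : i' j = false
    · rw [if_pos h, if_pos h, sgn_true,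
        show -(sufSum i' j + 1) = -1 + -(sufSum i' j) by ring, zpow_add₀ hv, zpow_neg_one]
      ring
    · rw [if_neg h, if_neg h, mul_zero]

lemma Fop_tensY_false (hv : v ≠ 0) (g : Tn k n) :
    Fop v (n + 1) (tensY false g) = tensY false (v • Fop v n g) := by
  funext i
  rw [← Fin.snoc_init_self i]
  generalize Fin.init i = i'
  generalize i (Fin.last n) = b
  rw [Fop_apply, Finset.sum_filter, Fin.sum_univ_castSucc]
  have hterm : ∀ j : Fin n,
      (if (Fin.snoc i' b : Fin (n + 1) → Bool) j.castSucc = false then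
        v ^ (-(sufSum (Fin.snoc i' b) j.castSucc)) *
          tensY false g (Function.update (Fin.snoc i' b) j.castSucc true) else 0)
      = (if i' j = false then
          v ^ (-(sufSum i' j + sgn b)) *
            tensY false g (Fin.snoc (Function.update i' j true) b) else 0) := by
    intro j
    rw [Fin.snoc_castSucc, sufSum_snoc_castSucc, ← Fin.snoc_update]
  rw [Finset.sum_congr rfl (fun j _ => hterm j)]
  rcases b with _ | _
  · -- b = false
    rw [tensY_snoc_same, Fin.snoc_last, if_pos rfl, Fin.update_snoc_last,
      tensY_snoc_ne (by simp), mul_zero, add_zero, Pi.smul_apply, smul_eq_mul,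
      Fop_apply, Finset.sum_filter, Finset.mul_sum]
    refine Finset.sum_congr rfl fun j _ => ?_
    rw [tensY_snoc_same]
    by_cases h : i' j = false
    · rw [if_pos h, if_pos h, sgn_false,
        show -(sufSum i' j + (-1)) = 1 + -(sufSum i' j) by ring, zpow_add₀ hv, zpow_one]
      ring
    · rw [if_neg h, if_neg h, mul_zero]
  · -- b = true
    rw [tensY_snoc_ne (by simp), Fin.snoc_last, if_neg (by simp), add_zero]
    refine Finset.sum_eq_zero fun j _ => ?_
    rw [tensY_snoc_ne (by simp)]
    simp

lemma Eop_tensY_true (g : Tn k n) :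
    Eop v (n + 1) (tensY true g) = tensY true (Eop v n g) := by
  funext i
  rw [← Fin.snoc_init_self i]
  generalize Fin.init i = i'
  generalize i (Fin.last n) = b
  rw [Eop_apply, Finset.sum_filter, Fin.sum_univ_castSucc]
  have hterm : ∀ j : Fin n,
      (if (Fin.snoc i' b : Fin (n + 1) → Bool) j.castSucc = true then
        v ^ (prefSum (Fin.snoc i' b) j.castSucc) *
          tensY true g (Function.update (Fin.snoc i' b) j.castSucc false) else 0)
      = (if i' j = true then
          v ^ (prefSum i' j) * tensY true g (Fin.snoc (Function.update i' j false) b)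
        else 0) := by
    intro j
    rw [Fin.snoc_castSucc, prefSum_snoc_castSucc, ← Fin.snoc_update]
  rw [Finset.sum_congr rfl (fun j _ => hterm j)]
  rcases b with _ | _
  · -- b = false
    rw [tensY_snoc_ne (by simp), Fin.snoc_last, if_neg (by simp), add_zero]
    refine Finset.sum_eq_zero fun j _ => ?_
    rw [tensY_snoc_ne (by simp)]
    simp
  · -- b = true
    rw [tensY_snoc_same, Fin.snoc_last, if_pos rfl, Fin.update_snoc_last,
      tensY_snoc_ne (by simp), mul_zero, add_zero, Eop_apply, Finset.sum_filter]
    refine Finset.sum_congr rfl fun j _ => ?_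
    rw [tensY_snoc_same]

lemma Eop_tensY_false (g : Tn k n) :
    Eop v (n + 1) (tensY false g) = tensY false (Eop v n g) + tensY true (Kop v n g) := by
  funext i
  rw [← Fin.snoc_init_self i]
  generalize Fin.init i = i'
  generalize i (Fin.last n) = b
  rw [Eop_apply, Finset.sum_filter, Fin.sum_univ_castSucc, Pi.add_apply]
  have hterm : ∀ j : Fin n,
      (if (Fin.snoc i' b : Fin (n + 1) → Bool) j.castSucc = true then
        v ^ (prefSum (Fin.snoc i' b) j.castSucc) *
          tensY false g (Function.update (Fin.snoc i' b) j.castSucc false) else 0)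
      = (if i' j = true then
          v ^ (prefSum i' j) * tensY false g (Fin.snoc (Function.update i' j false) b)
        else 0) := by
    intro j
    rw [Fin.snoc_castSucc, prefSum_snoc_castSucc, ← Fin.snoc_update]
  rw [Finset.sum_congr rfl (fun j _ => hterm j)]
  rcases b with _ | _
  · -- b = false
    rw [tensY_snoc_same, tensY_snoc_ne (by simp), Fin.snoc_last, if_neg (by simp),
      add_zero, add_zero, Eop_apply, Finset.sum_filter]
    refine Finset.sum_congr rfl fun j _ => ?_
    rw [tensY_snoc_same]
  · -- b = true
    rw [tensY_snoc_ne (by simp), tensY_snoc_same, Fin.snoc_last, if_pos rfl,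
      prefSum_snoc_last, Fin.update_snoc_last, tensY_snoc_same, Kop_apply]
    rw [Finset.sum_congr rfl (fun j _ => show
      (if i' j = true then v ^ (prefSum i' j) *
        tensY false g (Fin.snoc (Function.update i' j false) true) else 0) = 0 by
      rw [tensY_snoc_ne (by simp)]; simp)]
    simp

lemma Fop_Kop_apply (hv : v ≠ 0) (g : Tn k n) (i : Fin n → Bool) :
    Fop v n (Kop v n g) i = v ^ (wt i + 2) * Fop v n g i := by
  rw [Fop_apply, Fop_apply, Finset.mul_sum]
  refine Finset.sum_congr rfl fun j hj => ?_
  rw [Finset.mem_filter] at hj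
  rw [Kop_apply, wt_update, hj.2]
  rw [show wt i - sgn false + sgn true = wt i + 2 by simp; ring]
  ring

lemma Eop_zero_dim (f : Tn k 0) (i : Fin 0 → Bool) : Eop v 0 f i = 0 := by
  rw [Eop_apply]
  simp

lemma Fop_zero_dim (f : Tn k 0) (i : Fin 0 → Bool) : Fop v 0 f i = 0 := by
  rw [Fop_apply]
  simp

lemma wt_zero_dim (i : Fin 0 → Bool) : wt i = 0 := by
  unfold wt; simp

lemma EF_comm (hv : v ≠ 0) :
    ∀ (n : ℕ) (f : Tn k n) (i : Fin n → Bool),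
      Eop v n (Fop v n f) i - Fop v n (Eop v n f) i = qint v (wt i) * f i := by
  intro n
  induction n with
  | zero =>
      intro f i
      rw [Eop_zero_dim, Fop_zero_dim, wt_zero_dim, qint_zero]
      ring
  | succ n ih =>
      suffices H : ∀ (f₁ f₂ : Tn k n) (i : Fin (n + 1) → Bool),
          Eop v (n+1) (Fop v (n+1) (tensY true f₁ + tensY false f₂)) i -
            Fop v (n+1) (Eop v (n+1) (tensY true f₁ + tensY false f₂)) i =
          qint v (wt i) * (tensY true f₁ + tensY false f₂) i by
        intro f i
        have hd := tensY_decomp f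
        calc Eop v (n+1) (Fop v (n+1) f) i - Fop v (n+1) (Eop v (n+1) f) i
            = Eop v (n+1) (Fop v (n+1) (tensY true (fun i' => f (Fin.snoc i' true)) +
                tensY false (fun i' => f (Fin.snoc i' false)))) i -
              Fop v (n+1) (Eop v (n+1) (tensY true (fun i' => f (Fin.snoc i' true)) +
                tensY false (fun i' => f (Fin.snoc i' false)))) i := by rw [← hd]
          _ = qint v (wt i) * (tensY true (fun i' => f (Fin.snoc i' true)) +
                tensY false (fun i' => f (Fin.snoc i' false))) i := H _ _ i
          _ = qint v (wt i) * f i := by rw [← hd]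
      intro f₁ f₂ i
      rw [← Fin.snoc_init_self i]
      generalize Fin.init i = i'
      generalize i (Fin.last n) = b
      simp only [map_add, map_smul, Fop_tensY_true hv, Fop_tensY_false hv,
        Eop_tensY_true, Eop_tensY_false, smul_add, tensY_smul]
      rcases b with _ | _
      · -- b = false : goal reduces to v*(EF-FE)f₂ - v^w f₂ = qint (w-1) f₂
        simp only [Pi.add_apply, Pi.smul_apply, smul_eq_mul,
          tensY_snoc_same, tensY_snoc_ne (show (false ≠ true) by simp),
          tensY_snoc_ne (show (true ≠ false) by simp), wt_snoc, sgn_false,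
          map_smul, tensY_smul, Kop_apply, mul_zero, add_zero, zero_add, smul_eq_mul]
        have hcomm := ih f₂ i'
        have hq : qint v (wt i' + (-1)) = v * qint v (wt i') - v ^ (wt i') := by
          have h := qint_add_one' hv (wt i' + (-1))
          rw [show wt i' + (-1) + 1 = wt i' by ring] at h
          rw [show wt i' + (-1) = wt i' - 1 by ring]
          have : v * qint v (wt i') = qint v (wt i' - 1) + v * v ^ (wt i' - 1) := by
            rw [h, show wt i' + (-1) = wt i' - 1 by ring]
            field_simp
          rw [this, show v * v ^ (wt i' - 1) = v ^ (wt i') by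
            rw [mul_comm, ← zpow_add_one₀ hv, sub_add_cancel]]
          ring
        rw [hq]
        linear_combination v * hcomm
      · -- b = true
        simp only [Pi.add_apply, Pi.smul_apply, smul_eq_mul,
          tensY_snoc_same, tensY_snoc_ne (show (false ≠ true) by simp),
          tensY_snoc_ne (show (true ≠ false) by simp), wt_snoc, sgn_true,
          map_smul, tensY_smul, Kop_apply, mul_zero, add_zero, zero_add, smul_eq_mul]
        have hcomm := ih f₁ i'
        have hfk := Fop_Kop_apply hv f₂ i'
        have hq : qint v (wt i' + 1) = v⁻¹ * qint v (wt i') + v ^ (wt i') :=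
          qint_add_one' hv (wt i')
        have hvv : v⁻¹ * v ^ (wt i' + 2) = v * v ^ (wt i') := by
          rw [show wt i' + 2 = 1 + (wt i' + 1) by ring, zpow_add₀ hv,
            zpow_add_one₀ hv, zpow_one]
          field_simp
        rw [hq, hfk]
        linear_combination v⁻¹ * hcomm - Fop v n f₂ i' * hvv
      
end Stmt14Aux
-- ### Chunk 4: weights, adjointness, highest weight vectors
namespace Stmt14Aux
open Finset

variable {k : Type*} [Field k] {v : k} {n : ℕ}

/-- `f` is supported in weight `w`. -/
def PureWt (w : ℤ) {n : ℕ} (f : Tn k n) : Prop := ∀ i, f i ≠ 0 → wt i = w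

lemma PureWt.smul {w : ℤ} {f : Tn k n} (h : PureWt w f) (c : k) : PureWt w (c • f) :=
  fun i hi => h i (fun h0 => hi (by simp [Pi.smul_apply, h0]))

lemma PureWt.sub {w : ℤ} {f g : Tn k n} (hf : PureWt w f) (hg : PureWt w g) :
    PureWt w (f - g) := by
  intro i hi
  rcases eq_or_ne (f i) 0 with h | h
  · exact hg i (by intro h0; apply hi; simp [Pi.sub_apply, h, h0])
  · exact hf i h

lemma PureWt.tensY {w : ℤ} {f : Tn k n} (h : PureWt w f) (b : Bool) :
    PureWt (w + sgn b) (tensY b f) := by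
  intro i hi
  rw [← Fin.snoc_init_self i] at hi ⊢
  rcases eq_or_ne (i (Fin.last n)) b with hb | hb
  · rw [hb] at hi ⊢
    rw [tensY_snoc_same] at hi
    rw [wt_snoc, h _ hi]
  · rw [tensY_snoc_ne hb] at hi
    exact absurd rfl hi

lemma PureWt.Fop {w : ℤ} {f : Tn k n} (h : PureWt w f) : PureWt (w - 2) (Fop v n f) := by
  intro i hi
  rw [Fop_apply] at hi
  obtain ⟨j, hj, hne⟩ := Finset.exists_ne_zero_of_sum_ne_zero hi
  rw [Finset.mem_filter] at hj
  have hf : f (Function.update i j true) ≠ 0 := by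
    intro h0; apply hne; rw [h0, mul_zero]
  have := h _ hf
  rw [wt_update, hj.2] at this
  simp only [sgn_false, sgn_true] at this
  omega

lemma Kop_eq_of_pureWt {w : ℤ} {f : Tn k n} (h : PureWt w f) :
    Kop v n f = v ^ w • f := by
  funext i
  rcases eq_or_ne (f i) 0 with h0 | h0
  · simp [Kop_apply, h0]
  · rw [Kop_apply, h i h0, Pi.smul_apply, smul_eq_mul]

lemma form_eq_zero_of_pureWt {w w' : ℤ} {f g : Tn k n} (hf : PureWt w f)
    (hg : PureWt w' g) (hww : w ≠ w') : form f g = 0 := by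
  refine Finset.sum_eq_zero fun i _ => ?_
  rcases eq_or_ne (f i) 0 with h0 | h0
  · rw [h0, zero_mul]
  · rcases eq_or_ne (g i) 0 with h1 | h1
    · rw [h1, mul_zero]
    · exact absurd ((hf i h0).symm.trans (hg i h1)) hww

lemma sum_weight_factor {u : ℤ} {f : Tn k n} (h : PureWt u f)
    (G : (Fin n → Bool) → k) :
    ∑ i, f i * (v ^ (1 - wt i) * G i) = v ^ (1 - u) * ∑ i, f i * G i := by
  rw [Finset.mul_sum]
  refine Finset.sum_congr rfl fun i _ => ?_
  rcases eq_or_ne (f i) 0 with h0 | h0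
  · rw [h0]; ring
  · rw [h i h0]; ring

lemma form_Fop (hv : v ≠ 0) :
    ∀ (n : ℕ) (f g : Tn k n),
      form (Fop v n f) g = ∑ i, f i * (v ^ (1 - wt i) * Eop v n g i) := by
  intro n
  induction n with
  | zero =>
      intro f g
      unfold form
      refine Finset.sum_congr rfl fun i _ => ?_
      rw [Fop_zero_dim, Eop_zero_dim]
      ring
  | succ n ih =>
      suffices H : ∀ (f₁ f₂ g₁ g₂ : Tn k n),
          form (Fop v (n+1) (tensY true f₁ + tensY false f₂))
              (tensY true g₁ + tensY false g₂) =
            ∑ i, (tensY true f₁ + tensY false f₂) i *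
              (v ^ (1 - wt i) * Eop v (n+1) (tensY true g₁ + tensY false g₂) i) by
        intro f g
        have hf := tensY_decomp f
        have hg := tensY_decomp g
        rw [hf, hg]
        exact H _ _ _ _
      intro f₁ f₂ g₁ g₂
      rw [map_add, Fop_tensY_true hv, Fop_tensY_false hv]
      simp only [form_add_left, form_add_right, tensY_smul, form_smul_left, form_tensY]
      simp only [eq_self_iff_true, if_true, show ((true : Bool) = false) = False by simp,
        show ((false : Bool) = true) = False by simp, if_false, mul_zero, add_zero, zero_add]
      rw [ih f₁ g₁, ih f₂ g₂]
      rw [sum_snoc_split (fun i => (tensY true f₁ + tensY false f₂) i *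
        (v ^ (1 - wt i) * Eop v (n+1) (tensY true g₁ + tensY false g₂) i))]
      rw [Finset.mul_sum, Finset.mul_sum,
        show form f₁ g₂ = ∑ i, f₁ i * g₂ i from rfl,
        ← Finset.sum_add_distrib, ← Finset.sum_add_distrib]
      refine Finset.sum_congr rfl fun i' _ => ?_
      simp only [map_add, Eop_tensY_true, Eop_tensY_false, Pi.add_apply,
        tensY_snoc_same, tensY_snoc_ne (show (false : Bool) ≠ true by simp),
        tensY_snoc_ne (show (true : Bool) ≠ false by simp),
        wt_snoc, sgn_true, sgn_false, Kop_apply, add_zero, zero_add]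
      have ha : v ^ (1 - (wt i' + 1)) = v⁻¹ * v ^ (1 - wt i') := by
        rw [show (1 - (wt i' + 1)) = (-1) + (1 - wt i') by ring, zpow_add₀ hv, zpow_neg_one]
      have hb : v ^ (1 - (wt i' + (-1))) = v * v ^ (1 - wt i') := by
        rw [show (1 - (wt i' + (-1))) = 1 + (1 - wt i') by ring, zpow_add₀ hv, zpow_one]
      have hc : v ^ (1 - wt i') * v ^ (wt i') = v := by
        rw [← zpow_add₀ hv, show 1 - wt i' + wt i' = 1 by ring, zpow_one]
      have hd : v⁻¹ * v = 1 := inv_mul_cancel₀ hv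
      rw [ha, hb]
      linear_combination (-(f₁ i' * g₂ i' * v⁻¹)) * hc - (f₁ i' * g₂ i') * hd

-- unfolding Omega
lemma Omega_snoc_true {α : Fin (n+1) → Bool} (h : α (Fin.last n) = true) :
    Omega v (n+1) α = Phi1 (Omega v n (fun t => α t.castSucc)) := by
  rw [Omega, if_pos h]

lemma Omega_snoc_false {α : Fin (n+1) → Bool} (h : α (Fin.last n) = false) :
    Omega v (n+1) α = Phi2 v (wt (fun t => α t.castSucc))
      (Omega v n (fun t => α t.castSucc)) := by
  rw [Omega, if_neg (by simp [h])]

lemma wt_eq_init (α : Fin (n+1) → Bool) :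
    wt α = wt (fun t => α t.castSucc) + sgn (α (Fin.last n)) := by
  conv_lhs => rw [← Fin.snoc_init_self α]
  rw [wt_snoc]
  rfl

@[simp] lemma tensY_zero (b : Bool) : tensY b (0 : Tn k n) = 0 := by
  funext i
  unfold tensY
  split <;> rfl

lemma pureWt_Omega : ∀ (n : ℕ) (α : Fin n → Bool), PureWt (wt α) (Omega v n α) := by
  intro n
  induction n with
  | zero =>
      intro α i _
      rw [wt_zero_dim, wt_zero_dim]
  | succ n ih =>
      intro α
      rcases h : α (Fin.last n) with _ | _
      · rw [Omega_snoc_false h, wt_eq_init α, h, sgn_false]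
        unfold Phi2
        have h1 : PureWt ((wt fun t => α t.castSucc) + (-1))
            (qint v (wt fun t => α t.castSucc) •
              tensY false (Omega v n fun t => α t.castSucc)) := by
          have h0 := ((ih (fun t => α t.castSucc)).tensY false).smul
            (qint v (wt fun t => α t.castSucc))
          rw [sgn_false] at h0
          exact h0
        have h2 : PureWt ((wt fun t => α t.castSucc) + (-1))
            ((v ^ wt fun t => α t.castSucc) •
              tensY true (Fop v n (Omega v n fun t => α t.castSucc))) := by
          have h3 := (((ih (fun t => α t.castSucc)).Fop (v := v)).tensY true).smul
            (v ^ wt fun t => α t.castSucc)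
          rw [sgn_true] at h3
          rw [show (wt fun t => α t.castSucc) + (-1)
            = (wt fun t => α t.castSucc) - 2 + 1 by ring]
          exact h3
        exact h1.sub h2
      · rw [Omega_snoc_true h, wt_eq_init α, h, sgn_true]
        unfold Phi1
        exact (ih _).tensY true

lemma Eop_Fop_of_highest {w : ℤ} {f : Tn k n} (hv : v ≠ 0) (hE : Eop v n f = 0)
    (hw : PureWt w f) : Eop v n (Fop v n f) = qint v w • f := by
  funext i
  have h := EF_comm hv n f i
  rw [hE] at h
  simp only [map_zero, Pi.zero_apply, sub_zero] at h
  rw [h, Pi.smul_apply, smul_eq_mul]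
  rcases eq_or_ne (f i) 0 with h0 | h0
  · rw [h0, mul_zero, mul_zero]
  · rw [hw i h0]

lemma Eop_Omega (hv : v ≠ 0) : ∀ (n : ℕ) (α : Fin n → Bool),
    Eop v n (Omega v n α) = 0 := by
  intro n
  induction n with
  | zero =>
      intro α
      funext i
      rw [Eop_zero_dim, Pi.zero_apply]
  | succ n ih =>
      intro α
      rcases h : α (Fin.last n) with _ | _
      · rw [Omega_snoc_false h]
        unfold Phi2
        rw [map_sub, map_smul, map_smul, Eop_tensY_false, Eop_tensY_true,
          ih, tensY_zero, zero_add,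
          Kop_eq_of_pureWt (pureWt_Omega n _),
          Eop_Fop_of_highest hv (ih _) (pureWt_Omega n _),
          tensY_smul, tensY_smul]
        rw [smul_smul, smul_smul, mul_comm]
        exact sub_self _
      · rw [Omega_snoc_true h]
        unfold Phi1
        rw [Eop_tensY_true, ih, tensY_zero]

end Stmt14Aux
-- ### Chunk 5: powers of F
namespace Stmt14Aux
open Finset

variable {k : Type*} [Field k] {v : k} {n : ℕ}

lemma Fpow_succ' (a : ℕ) (f : Tn k n) :
    (Fop v n ^ (a + 1)) f = Fop v n ((Fop v n ^ a) f) := by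
  rw [pow_succ']
  rfl

lemma pureWt_Fpow {w : ℤ} {f : Tn k n} (h : PureWt w f) (a : ℕ) :
    PureWt (w - 2 * a) ((Fop v n ^ a) f) := by
  induction a with
  | zero => simpa using h
  | succ a ih =>
      rw [Fpow_succ']
      have := ih.Fop (v := v)
      rw [show w - 2 * (a : ℕ) - 2 = w - 2 * ((a : ℕ) + 1) by push_cast; ring] at this
      rw [show ((a + 1 : ℕ) : ℤ) = ((a : ℕ) : ℤ) + 1 by push_cast; ring]
      exact this

lemma Eop_Fpow (hv : v ≠ 0) {w : ℤ} {f : Tn k n} (hE : Eop v n f = 0)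
    (hw : PureWt w f) (a : ℕ) :
    Eop v n ((Fop v n ^ (a + 1)) f) =
      (qint v ((a : ℤ) + 1) * qint v (w - a)) • ((Fop v n ^ a) f) := by
  induction a with
  | zero =>
      rw [Fpow_succ', pow_zero, Module.End.one_apply, Eop_Fop_of_highest hv hE hw]
      norm_num [qint_one]
  | succ a ih =>
      rw [Fpow_succ']
      funext i
      have hcm := EF_comm hv n ((Fop v n ^ (a + 1)) f) i
      have heq : Eop v n (Fop v n ((Fop v n ^ (a+1)) f)) i
          = Fop v n (Eop v n ((Fop v n ^ (a+1)) f)) i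
            + qint v (wt i) * ((Fop v n ^ (a+1)) f) i := by
        rw [← hcm]; ring
      rw [heq, ih, map_smul]
      have hpw : PureWt (w - 2 * ((a : ℤ) + 1)) ((Fop v n ^ (a + 1)) f) := by
        have := pureWt_Fpow hw (a + 1) (v := v)
        rwa [show ((a + 1 : ℕ) : ℤ) = (a : ℤ) + 1 by push_cast; ring] at this
      have hterm : qint v (wt i) * ((Fop v n ^ (a+1)) f) i
          = qint v (w - 2 * ((a : ℤ) + 1)) * ((Fop v n ^ (a+1)) f) i := by
        rcases eq_or_ne (((Fop v n ^ (a+1)) f) i) 0 with h0 | h0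
        · rw [h0, mul_zero, mul_zero]
        · rw [hpw i h0]
      rw [hterm]
      have hcross := qint_cross hv w (a + 1)
      rw [show ((a + 1 : ℕ) : ℤ) = (a : ℤ) + 1 by push_cast; ring] at hcross
      rw [show w - ((a : ℤ) + 1) + 1 = w - a by ring] at hcross
      have hFs : Fop v n ((Fop v n ^ a) f) = (Fop v n ^ (a + 1)) f := (Fpow_succ' a f).symm
      simp only [Pi.smul_apply, smul_eq_mul, hFs]
      rw [show ((a + 1 : ℕ) : ℤ) = (a : ℤ) + 1 by push_cast; ring]
      linear_combination (-(((Fop v n ^ (a+1)) f) i)) * hcross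

lemma form_Fpow_Fpow (hv : v ≠ 0) {w w' : ℤ} {f g : Tn k n}
    (hEf : Eop v n f = 0) (hwf : PureWt w f)
    (hEg : Eop v n g = 0) (hwg : PureWt w' g) :
    ∀ a b : ℕ, (form f g = 0 ∨ a ≠ b) →
      form ((Fop v n ^ a) f) ((Fop v n ^ b) g) = 0 := by
  intro a
  induction a generalizing g w' with
  | zero =>
      intro b hb
      rcases b with _ | b'
      · rcases hb with h | h
        · simpa using h
        · exact absurd rfl h
      · rw [pow_zero, Module.End.one_apply, form_symm, Fpow_succ', form_Fop hv]
        refine Finset.sum_eq_zero fun i _ => ?_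
        rw [hEf, Pi.zero_apply]
        ring
  | succ a' ih =>
      intro b hb
      rcases b with _ | b'
      · rw [pow_zero, Module.End.one_apply, Fpow_succ', form_Fop hv]
        refine Finset.sum_eq_zero fun i _ => ?_
        rw [hEg, Pi.zero_apply]
        ring
      · rw [Fpow_succ', form_Fop hv, Eop_Fpow hv hEg hwg b']
        have hstep := sum_weight_factor (v := v) (pureWt_Fpow hwf a' (v := v))
          (fun i => ((qint v ((b' : ℤ) + 1) * qint v (w' - b')) • ((Fop v n ^ b') g)) i)
        rw [hstep]
        have : ∑ i, ((Fop v n ^ a') f) i *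
            ((qint v ((b' : ℤ) + 1) * qint v (w' - b')) • ((Fop v n ^ b') g)) i
            = (qint v ((b' : ℤ) + 1) * qint v (w' - b')) *
              form ((Fop v n ^ a') f) ((Fop v n ^ b') g) := by
          unfold form
          rw [Finset.mul_sum]
          exact Finset.sum_congr rfl fun i _ => by simp [Pi.smul_apply]; ring
        rw [this, ih hEg hwg b' (by
          rcases hb with h | h
          · exact Or.inl h
          · exact Or.inr (by omega))]
        ring

lemma form_Fpow_self (hv : v ≠ 0) {w : ℤ} {f : Tn k n}
    (hE : Eop v n f = 0) (hw : PureWt w f) (a : ℕ) :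
    form ((Fop v n ^ a) f) ((Fop v n ^ a) f) =
      (∏ t ∈ Finset.range a,
        (v ^ (1 - (w - 2 * (t : ℤ))) * (qint v ((t : ℤ) + 1) * qint v (w - t)))) *
        form f f := by
  induction a with
  | zero => simp
  | succ a ih =>
      rw [Fpow_succ', form_Fop hv,
        show Fop v n ((Fop v n ^ a) f) = (Fop v n ^ (a+1)) f from (Fpow_succ' a f).symm,
        Eop_Fpow hv hE hw a]
      have hstep := sum_weight_factor (v := v) (pureWt_Fpow hw a (v := v))
        (fun i => ((qint v ((a : ℤ) + 1) * qint v (w - a)) • ((Fop v n ^ a) f)) i)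
      rw [hstep]
      have h2 : ∑ i, ((Fop v n ^ a) f) i *
          ((qint v ((a : ℤ) + 1) * qint v (w - a)) • ((Fop v n ^ a) f)) i
          = (qint v ((a : ℤ) + 1) * qint v (w - a)) *
            form ((Fop v n ^ a) f) ((Fop v n ^ a) f) := by
        unfold form
        rw [Finset.mul_sum]
        exact Finset.sum_congr rfl fun i _ => by simp [Pi.smul_apply]; ring
      rw [h2, ih, Finset.prod_range_succ]
      rw [show w - 2 * ((a : ℕ) : ℤ) = w - 2 * (a : ℤ) from rfl]
      ring

lemma qintN_ne_zero {N : ℕ} (hq : qfact v N ≠ 0) {m : ℕ} (h1 : 1 ≤ m) (h2 : m ≤ N) :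
    qintN v m ≠ 0 := by
  intro h0
  apply hq
  unfold qfact
  refine Finset.prod_eq_zero (i := m - 1) (Finset.mem_range.mpr (by omega)) ?_
  rw [show m - 1 + 1 = m by omega, h0]

lemma qint_ne_zero {N : ℕ} (hq : qfact v N ≠ 0) {m : ℤ} (h1 : 1 ≤ m) (h2 : m ≤ N) :
    qint v m ≠ 0 := by
  rw [show m = ((m.toNat : ℕ) : ℤ) by omega, qint_natCast]
  exact qintN_ne_zero hq (by omega) (by omega)

lemma form_Fpow_self_ne (hv : v ≠ 0) (hq : qfact v n ≠ 0) {w : ℤ} {f : Tn k n}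
    (hE : Eop v n f = 0) (hw : PureWt w f) (hf : form f f ≠ 0)
    (hwn : w ≤ (n : ℤ)) {a : ℕ} (ha : (a : ℤ) ≤ w) :
    form ((Fop v n ^ a) f) ((Fop v n ^ a) f) ≠ 0 := by
  rw [form_Fpow_self hv hE hw a]
  refine mul_ne_zero (Finset.prod_ne_zero_iff.mpr fun t ht => ?_) hf
  rw [Finset.mem_range] at ht
  refine mul_ne_zero (zpow_ne_zero _ hv) (mul_ne_zero ?_ ?_)
  · exact qint_ne_zero hq (by omega) (by omega)
  · exact qint_ne_zero hq (by omega) (by omega)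

end Stmt14Aux
-- ### Chunk 6: Omega orthogonality and norms
namespace Stmt14Aux
open Finset

variable {k : Type*} [Field k] {v : k} {n : ℕ}

lemma sum_le_castSucc (α : Fin (n + 1) → Bool) (j : Fin n) :
    ∑ t ∈ Finset.univ.filter (fun t => t ≤ j.castSucc), sgn (α t)
      = ∑ t ∈ Finset.univ.filter (fun t => t ≤ j), sgn (α t.castSucc) := by
  rw [Finset.sum_filter, Finset.sum_filter, Fin.sum_univ_castSucc]
  rw [if_neg (not_le.mpr (Fin.castSucc_lt_last j))]
  simp [Fin.castSucc_le_castSucc_iff]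

lemma isOneFactor_init {α : Fin (n + 1) → Bool} (h : IsOneFactor α) :
    IsOneFactor (fun t => α t.castSucc) := by
  intro j
  have h0 := h j.castSucc
  rwa [sum_le_castSucc] at h0

lemma sum_le_last (α : Fin (n + 1) → Bool) :
    ∑ t ∈ Finset.univ.filter (fun t => t ≤ Fin.last n), sgn (α t) = wt α := by
  unfold wt
  congr 1
  exact Finset.filter_true_of_mem fun t _ => Fin.le_last t

lemma one_le_wt_init {α : Fin (n + 1) → Bool} (hα : IsOneFactor α)
    (h : α (Fin.last n) = false) : 1 ≤ wt (fun t => α t.castSucc) := by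
  have h0 := hα (Fin.last n)
  rw [sum_le_last] at h0
  have h1 := wt_eq_init α
  rw [h, sgn_false] at h1
  omega

lemma form_Phi1_Phi1 (f g : Tn k n) : form (Phi1 f) (Phi1 g) = form f g := by
  unfold Phi1
  rw [form_tensY]
  simp

lemma form_Phi1_Phi2 (hv : v ≠ 0) {f : Tn k n} (g : Tn k n)
    (hEf : Eop v n f = 0) (w : ℤ) : form (Phi1 f) (Phi2 v w g) = 0 := by
  unfold Phi1 Phi2
  have h0 : form (Fop v n g) f = 0 := by
    rw [form_Fop hv]
    exact Finset.sum_eq_zero fun i _ => by rw [hEf]; simp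
  rw [form_sub_right, form_smul_right, form_smul_right, form_tensY, form_tensY,
    if_neg (by simp), if_pos rfl, form_symm f (Fop v n g), h0]
  ring

lemma form_Phi2_Phi2 (w w' : ℤ) (f g : Tn k n) :
    form (Phi2 v w f) (Phi2 v w' g)
      = qint v w * qint v w' * form f g
        + v ^ w * v ^ w' * form (Fop v n f) (Fop v n g) := by
  unfold Phi2
  simp only [form_sub_left, form_sub_right, form_smul_left, form_smul_right, form_tensY]
  simp only [eq_self_iff_true, if_true, show ((true : Bool) = false) = False by simp,
    show ((false : Bool) = true) = False by simp, if_false]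
  ring

lemma eq_of_init_last {α β : Fin (n + 1) → Bool}
    (h1 : (fun t : Fin n => α t.castSucc) = (fun t : Fin n => β t.castSucc))
    (h2 : α (Fin.last n) = β (Fin.last n)) : α = β := by
  funext t
  induction t using Fin.lastCases with
  | last => exact h2
  | cast i => exact congrFun h1 i

lemma form_Omega_ne (hv : v ≠ 0) : ∀ (n : ℕ) (α β : Fin n → Bool), α ≠ β →
    form (Omega v n α) (Omega v n β) = 0 := by
  intro n
  induction n with
  | zero => exact fun α β hab => absurd (Subsingleton.elim α β) hab
  | succ n ih =>
      intro α β hab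
      rcases hα : α (Fin.last n) with _ | _ <;> rcases hβ : β (Fin.last n) with _ | _
      · -- false, false
        rw [Omega_snoc_false hα, Omega_snoc_false hβ, form_Phi2_Phi2]
        have hne : (fun t : Fin n => α t.castSucc) ≠ (fun t : Fin n => β t.castSucc) :=
          fun h => hab (eq_of_init_last h (hα.trans hβ.symm))
        have hFF : form (Fop v n (Omega v n fun t => α t.castSucc))
            (Fop v n (Omega v n fun t => β t.castSucc)) = 0 := by
          have h1 := form_Fpow_Fpow hv (Eop_Omega hv n _) (pureWt_Omega n _)
            (Eop_Omega hv n _) (pureWt_Omega n _) 1 1 (Or.inl (ih _ _ hne))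
          simpa [pow_one] using h1
        rw [ih _ _ hne, hFF]
        ring
      · -- false, true
        rw [Omega_snoc_false hα, Omega_snoc_true hβ, form_symm]
        exact form_Phi1_Phi2 hv _ (Eop_Omega hv n _) _
      · -- true, false
        rw [Omega_snoc_true hα, Omega_snoc_false hβ]
        exact form_Phi1_Phi2 hv _ (Eop_Omega hv n _) _
      · -- true, true
        rw [Omega_snoc_true hα, Omega_snoc_true hβ, form_Phi1_Phi1]
        exact ih _ _ (fun h => hab (eq_of_init_last h (hα.trans hβ.symm)))

lemma qint_ne_zero' {N : ℕ} (hq : ∀ m : ℕ, 1 ≤ m → m ≤ N → qintN v m ≠ 0)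
    {m : ℤ} (h1 : 1 ≤ m) (h2 : m ≤ N) : qint v m ≠ 0 := by
  rw [show m = ((m.toNat : ℕ) : ℤ) by omega, qint_natCast]
  exact hq _ (by omega) (by omega)

lemma form_Omega_self_ne (hv : v ≠ 0) :
    ∀ (n : ℕ), (∀ m : ℕ, 1 ≤ m → m ≤ n → qintN v m ≠ 0) →
    ∀ (α : Fin n → Bool), IsOneFactor α →
      form (Omega v n α) (Omega v n α) ≠ 0 := by
  intro n
  induction n with
  | zero =>
      intro _ α _
      have h1 : form (Omega v 0 α) (Omega v 0 α) = 1 := by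
        unfold form Omega
        simp
      rw [h1]
      exact one_ne_zero
  | succ n ih =>
      intro hq α hα
      have hq' : ∀ m : ℕ, 1 ≤ m → m ≤ n → qintN v m ≠ 0 := fun m h1 h2 => hq m h1 (by omega)
      have hα' := isOneFactor_init hα
      have hN := ih hq' _ hα'
      rcases h : α (Fin.last n) with _ | _
      · rw [Omega_snoc_false h, form_Phi2_Phi2]
        have hw1 : 1 ≤ wt (fun t => α t.castSucc) := one_le_wt_init hα h
        have hwn : wt (fun t => α t.castSucc) ≤ (n : ℤ) := wt_le _
        have hFF : form (Fop v n (Omega v n fun t => α t.castSucc))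
            (Fop v n (Omega v n fun t => α t.castSucc))
            = v ^ (1 - wt (fun t => α t.castSucc)) *
              (qint v 1 * qint v (wt (fun t => α t.castSucc))) *
              form (Omega v n fun t => α t.castSucc) (Omega v n fun t => α t.castSucc) := by
          have h1 := form_Fpow_self hv (Eop_Omega hv n (fun t => α t.castSucc))
            (pureWt_Omega n _) 1
          rw [pow_one, Finset.prod_range_one] at h1
          rw [h1]
          norm_num
        rw [hFF, qint_one]
        set w := wt (fun t => α t.castSucc) with hwdef
        set N := form (Omega v n fun t => α t.castSucc) (Omega v n fun t => α t.castSucc)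
          with hNdef
        have hkey : qint v w * qint v w * N + v ^ w * v ^ w * (v ^ (1 - w) * (1 * qint v w) * N)
            = (qint v w * (v * qint v (w + 1))) * N := by
          have hq1 : qint v (w + 1) = v⁻¹ * qint v w + v ^ w := qint_add_one' hv w
          have hc : v ^ w * v ^ (1 - w) = v := by
            rw [← zpow_add₀ hv, show w + (1 - w) = 1 by ring, zpow_one]
          have hd : v * v⁻¹ = 1 := mul_inv_cancel₀ hv
          rw [hq1]
          linear_combination (qint v w * v ^ w * N) * hc -
            (qint v w * qint v w * N) * hd
        rw [hkey]
        refine mul_ne_zero (mul_ne_zero ?_ (mul_ne_zero hv ?_)) hN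
        · exact qint_ne_zero' hq hw1 (by omega)
        · exact qint_ne_zero' hq (by omega) (by push_cast; omega)
      · rw [Omega_snoc_true h, form_Phi1_Phi1]
        exact hN

end Stmt14Aux
-- ### Chunk 7: counting the index set
namespace Stmt14Aux
open Finset

variable {k : Type*} [Field k] {v : k} {n : ℕ}

abbrev idxType (n : ℕ) :=
  {p : (Fin n → Bool) × ℕ // IsOneFactor p.1 ∧ (p.2 : ℤ) ≤ wt p.1}

lemma init_snoc' (α : Fin n → Bool) (b : Bool) :
    (fun t : Fin n => (Fin.snoc α b : Fin (n + 1) → Bool) t.castSucc) = α := by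
  funext t
  simp

lemma wt_nonneg_of_oneFactor : ∀ {n : ℕ} {α : Fin n → Bool},
    IsOneFactor α → 0 ≤ wt α := by
  intro n
  match n with
  | 0 => intro α _; rw [wt_zero_dim]
  | n + 1 =>
      intro α h
      have h0 := h (Fin.last n)
      rwa [sum_le_last] at h0

lemma isOneFactor_snoc {α : Fin n → Bool} (h : IsOneFactor α) {b : Bool}
    (hb : b = true ∨ 1 ≤ wt α) : IsOneFactor (Fin.snoc α b) := by
  intro j
  induction j using Fin.lastCases with
  | last =>
      rw [sum_le_last, wt_snoc]
      rcases hb with hb | hb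
      · subst hb
        have := wt_nonneg_of_oneFactor h
        simp
        omega
      · rcases b with _ | _ <;> simp <;> omega
  | cast j =>
      rw [sum_le_castSucc]
      have h0 := h j
      calc (0 : ℤ) ≤ ∑ t ∈ Finset.univ.filter (fun t => t ≤ j), sgn (α t) := h0
        _ = ∑ t ∈ Finset.univ.filter (fun t => t ≤ j),
              sgn ((Fin.snoc α b : Fin (n+1) → Bool) t.castSucc) := by
            refine Finset.sum_congr rfl fun t _ => ?_
            simp

/-- forward map: `Idx n × Bool → Idx (n+1)` -/
def idxF (n : ℕ) : idxType n × Bool → idxType (n + 1) := fun q =>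
  if hb : q.2 = true then
    ⟨(Fin.snoc q.1.1.1 true, q.1.1.2), by
      refine ⟨isOneFactor_snoc q.1.2.1 (Or.inl rfl), ?_⟩
      rw [wt_snoc, sgn_true]
      have := q.1.2.2
      omega⟩
  else
    if ha : (q.1.1.2 : ℤ) = wt q.1.1.1 then
      ⟨(Fin.snoc q.1.1.1 true, q.1.1.2 + 1), by
        refine ⟨isOneFactor_snoc q.1.2.1 (Or.inl rfl), ?_⟩
        rw [wt_snoc, sgn_true]
        push_cast
        omega⟩
    else
      ⟨(Fin.snoc q.1.1.1 false, q.1.1.2), by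
        have h2 := q.1.2.2
        refine ⟨isOneFactor_snoc q.1.2.1 (Or.inr (by omega)), ?_⟩
        rw [wt_snoc, sgn_false]
        omega⟩

/-- backward map: `Idx (n+1) → Idx n × Bool` -/
def idxG (n : ℕ) : idxType (n + 1) → idxType n × Bool := fun p =>
  if hb : p.1.1 (Fin.last n) = true then
    if ha : (p.1.2 : ℤ) = wt (fun t : Fin n => p.1.1 t.castSucc) + 1 then
      (⟨((fun t : Fin n => p.1.1 t.castSucc),
          (wt (fun t : Fin n => p.1.1 t.castSucc)).toNat), by
        refine ⟨isOneFactor_init p.2.1, ?_⟩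
        dsimp only
        have := wt_nonneg_of_oneFactor (isOneFactor_init p.2.1)
        omega⟩, false)
    else
      (⟨((fun t : Fin n => p.1.1 t.castSucc), p.1.2), by
        refine ⟨isOneFactor_init p.2.1, ?_⟩
        dsimp only
        have h2 := p.2.2
        have h3 := wt_eq_init p.1.1
        rw [hb, sgn_true] at h3
        omega⟩, true)
  else
    (⟨((fun t : Fin n => p.1.1 t.castSucc), p.1.2), by
      refine ⟨isOneFactor_init p.2.1, ?_⟩
      dsimp only
      have h2 := p.2.2
      have h3 := wt_eq_init p.1.1
      rw [Bool.not_eq_true] at hb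
      rw [hb, sgn_false] at h3
      omega⟩, false)

lemma snoc_init_eq (p : Fin (n + 1) → Bool) (b : Bool) (hb : p (Fin.last n) = b) :
    Fin.snoc (fun t : Fin n => p t.castSucc) b = p := by
  rw [← hb]
  exact Fin.snoc_init_self p

def idxEquiv (n : ℕ) : idxType (n + 1) ≃ idxType n × Bool where
  toFun := idxG n
  invFun := idxF n
  left_inv := by
    intro p
    unfold idxG
    by_cases hb : p.1.1 (Fin.last n) = true
    · rw [dif_pos hb]
      by_cases ha : (p.1.2 : ℤ) = wt (fun t : Fin n => p.1.1 t.castSucc) + 1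
      · rw [dif_pos ha]
        unfold idxF
        simp only
        rw [dif_neg (by simp)]
        have hnn := wt_nonneg_of_oneFactor (isOneFactor_init p.2.1)
        rw [dif_pos (by omega)]
        apply Subtype.ext
        apply Prod.ext
        · exact snoc_init_eq p.1.1 true hb
        · simp only
          omega
      · rw [dif_neg ha]
        unfold idxF
        simp only
        rw [dif_pos trivial]
        apply Subtype.ext
        apply Prod.ext
        · exact snoc_init_eq p.1.1 true hb
        · rfl
    · rw [dif_neg hb]
      unfold idxF
      simp only
      rw [dif_neg (by simp)]
      have h3 := wt_eq_init p.1.1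
      rw [Bool.not_eq_true] at hb
      rw [hb, sgn_false] at h3
      have h2 := p.2.2
      rw [dif_neg (by omega)]
      apply Subtype.ext
      apply Prod.ext
      · exact snoc_init_eq p.1.1 false hb
      · rfl
  right_inv := by
    intro q
    rcases q with ⟨⟨⟨α, a⟩, hαa⟩, b⟩
    rcases b with _ | _
    · -- b = false
      unfold idxF
      simp only
      rw [dif_neg (by simp)]
      by_cases ha : (a : ℤ) = wt α
      · rw [dif_pos ha]
        unfold idxG
        simp only
        rw [dif_pos (show (Fin.snoc α true : Fin (n+1) → Bool) (Fin.last n) = true from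
          Fin.snoc_last _ _)]
        rw [dif_pos (show ((a + 1 : ℕ) : ℤ) =
            wt (fun t : Fin n => (Fin.snoc α true : Fin (n+1) → Bool) t.castSucc) + 1 by
          rw [init_snoc']
          push_cast
          omega)]
        apply Prod.ext
        · apply Subtype.ext
          apply Prod.ext
          · exact init_snoc' α true
          · simp only
            rw [init_snoc']
            omega
        · rfl
      · rw [dif_neg ha]
        unfold idxG
        simp only
        rw [dif_neg (by rw [Fin.snoc_last]; simp)]
        apply Prod.ext
        · apply Subtype.ext
          apply Prod.ext
          · exact init_snoc' α false
          · rfl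
        · rfl
    · -- b = true
      unfold idxF
      simp only
      rw [dif_pos trivial]
      unfold idxG
      rw [dif_pos (show (Fin.snoc α true : Fin (n+1) → Bool) (Fin.last n) = true from
        Fin.snoc_last _ _)]
      rw [dif_neg (show ¬ ((a : ℕ) : ℤ) =
          wt (fun t : Fin n => (Fin.snoc α true : Fin (n+1) → Bool) t.castSucc) + 1 by
        rw [init_snoc']
        have h5 : (a : ℤ) ≤ wt α := hαa.2
        omega)]
      apply Prod.ext
      · apply Subtype.ext
        apply Prod.ext
        · exact init_snoc' α true
        · rfl
      · rfl

lemma idx_finite : ∀ n : ℕ, Finite (idxType n) := by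
  intro n
  induction n with
  | zero =>
      refine Finite.of_injective (fun _ => ()) ?_
      intro p q _
      apply Subtype.ext
      apply Prod.ext
      · exact Subsingleton.elim _ _
      · have h1 := p.2.2
        have h2 := q.2.2
        rw [wt_zero_dim] at h1 h2
        omega
  | succ n ih =>
      exact Finite.of_equiv _ (idxEquiv n).symm

lemma idx_card : ∀ n : ℕ, Nat.card (idxType n) = 2 ^ n := by
  intro n
  induction n with
  | zero =>
      rw [pow_zero]
      have e : idxType 0 ≃ Unit := by
        refine ⟨fun _ => (), fun _ => ⟨((fun t => true), 0), ?_, ?_⟩, ?_, ?_⟩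
        · intro j
          exact absurd j.2 (by omega)
        · simp [wt_zero_dim]
        · intro p
          apply Subtype.ext
          apply Prod.ext
          · exact Subsingleton.elim _ _
          · have h1 := p.2.2
            rw [wt_zero_dim] at h1
            simp only
            omega
        · intro u
          rfl
      rw [Nat.card_congr e, Nat.card_unique]
  | succ n ih =>
      rw [Nat.card_congr (idxEquiv n)]
      have := idx_finite n
      rw [Nat.card_prod, ih, Nat.card_eq_fintype_card, Fintype.card_bool, pow_succ]

end Stmt14Aux
-- ### Chunk 8: assembly
namespace Stmt14Aux
open Finset

variable {k : Type*} [Field k] {v : k} {n : ℕ}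

lemma form_zero_left (g : Tn k n) : form (0 : Tn k n) g = 0 := by
  unfold form
  simp

lemma form_sum_left {ι : Type*} (s : Finset ι) (u : ι → Tn k n) (g : Tn k n) :
    form (∑ i ∈ s, u i) g = ∑ i ∈ s, form (u i) g := by
  classical
  induction s using Finset.induction_on with
  | empty => simpa using form_zero_left g
  | insert _ _ hx ih => rw [Finset.sum_insert hx, form_add_left, ih, Finset.sum_insert hx]

end Stmt14Aux

/-- if `[n]! ≠ 0`, the vectors `F^a Ω(α)` with `0 ≤ a ≤ i_α` form a
basis of `V^{⊗n}` whose elements are pairwise orthogonal. -/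
theorem stmt_14 {k : Type*} [Field k] (v : k) (hv : v ≠ 0) (n : ℕ)
    (hq : qfact v n ≠ 0) :
    ∃ b : Module.Basis {p : (Fin n → Bool) × ℕ // IsOneFactor p.1 ∧ (p.2 : ℤ) ≤ wt p.1} k
        (Tn k n),
      (∀ p, b p = (Fop v n ^ p.1.2) (Omega v n p.1.1)) ∧
      (∀ p q, p ≠ q → form (b p) (b q) = 0) := by
  classical
  have hfin : Finite (Stmt14Aux.idxType n) := Stmt14Aux.idx_finite n
  let _ : Fintype (Stmt14Aux.idxType n) := Fintype.ofFinite _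
  have hmem : IsOneFactor (fun _ : Fin n => true) := fun j =>
    Finset.sum_nonneg (fun t _ => by simp [sgn])
  have hwt0 : (0 : ℤ) ≤ wt (fun _ : Fin n => true) :=
    Finset.sum_nonneg (fun t _ => by simp [sgn])
  have hne : Nonempty (Stmt14Aux.idxType n) :=
    ⟨⟨((fun _ => true), 0), hmem, by simpa using hwt0⟩⟩
  set vec : Stmt14Aux.idxType n → Tn k n :=
    fun p => (Fop v n ^ p.1.2) (Omega v n p.1.1) with hvec
  have hqall : ∀ m : ℕ, 1 ≤ m → m ≤ n → qintN v m ≠ 0 := fun m h1 h2 =>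
    Stmt14Aux.qintN_ne_zero hq h1 h2
  have horth : ∀ p q : Stmt14Aux.idxType n, p ≠ q → form (vec p) (vec q) = 0 := by
    intro p q hpq
    refine Stmt14Aux.form_Fpow_Fpow hv (Stmt14Aux.Eop_Omega hv n p.1.1)
      (Stmt14Aux.pureWt_Omega n p.1.1) (Stmt14Aux.Eop_Omega hv n q.1.1)
      (Stmt14Aux.pureWt_Omega n q.1.1) p.1.2 q.1.2 ?_
    by_cases hab : p.1.2 = q.1.2
    · refine Or.inl (Stmt14Aux.form_Omega_ne hv n p.1.1 q.1.1 ?_)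
      intro hEq
      exact hpq (Subtype.ext (Prod.ext hEq hab))
    · exact Or.inr hab
  have hnorm : ∀ p : Stmt14Aux.idxType n, form (vec p) (vec p) ≠ 0 := by
    intro p
    exact Stmt14Aux.form_Fpow_self_ne hv hq (Stmt14Aux.Eop_Omega hv n p.1.1)
      (Stmt14Aux.pureWt_Omega n p.1.1)
      (Stmt14Aux.form_Omega_self_ne hv n hqall p.1.1 p.2.1)
      (Stmt14Aux.wt_le p.1.1) p.2.2
  have hli : LinearIndependent k vec := by
    rw [linearIndependent_iff']
    intro s g hsum p hp
    have h0 := congrArg (fun x => form x (vec p)) hsum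
    rw [Stmt14Aux.form_sum_left, Stmt14Aux.form_zero_left] at h0
    have h1 : ∀ i ∈ s, i ≠ p → form (g i • vec i) (vec p) = 0 := fun i _ hip => by
      rw [Stmt14Aux.form_smul_left, horth i p hip, mul_zero]
    rw [Finset.sum_eq_single p h1 (fun hps => absurd hp hps)] at h0
    rw [Stmt14Aux.form_smul_left] at h0
    exact (mul_eq_zero.mp h0).resolve_right (hnorm p)
  have hcard : Fintype.card (Stmt14Aux.idxType n) = Module.finrank k (Tn k n) := by
    rw [← Nat.card_eq_fintype_card, Stmt14Aux.idx_card n, Module.finrank_pi]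
    simp
  refine ⟨basisOfLinearIndependentOfCardEqFinrank hli hcard, ?_, ?_⟩
  · intro p
    rw [show ⇑(basisOfLinearIndependentOfCardEqFinrank hli hcard) = vec from
      coe_basisOfLinearIndependentOfCardEqFinrank hli hcard]
  · intro p q hpq
    rw [show ⇑(basisOfLinearIndependentOfCardEqFinrank hli hcard) = vec from
      coe_basisOfLinearIndependentOfCardEqFinrank hli hcard]
    exact horth p q hpq
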